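/- Let N ∈ GL(2,ℤ) with an eigenvalue α > 1 and eigenvector a ∈ ℝ² \ {0}. Then the group Z⁺_{SL(2,ℤ)}(N) := {K ∈ SL(2,ℤ) : KN = NK and Ka ∈ ℝ₊*·a} is infinite cyclic. -/

import Mathlib

open Matrix

private lemma eig_quad (M : Matrix (Fin 2) (Fin 2) ℝ) (v : Fin 2 → ℝ) (hv : v ≠ 0) (c : ℝ)
    (h : M.mulVec v = c • v) : c ^ 2 - M.trace * c + M.det = 0 := by
  have h0 : (M - c • 1).mulVec v = 0 := by
    rw [Matrix.sub_mulVec, Matrix.smul_mulVec, Matrix.one_mulVec, h, sub_self]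
  have hdet : (M - c • 1).det = 0 := by
    rw [← Matrix.exists_mulVec_eq_zero_iff]
    exact ⟨v, hv, h0⟩
  rw [Matrix.det_fin_two] at hdet
  rw [Matrix.det_fin_two, Matrix.trace_fin_two]
  simp [Matrix.sub_apply, Matrix.smul_apply, Matrix.one_apply] at hdet
  ring_nf
  ring_nf at hdet
  linarith

private lemma rat_eig_false (t d : ℤ) (hd : IsUnit d) (α : ℝ) (hα : 1 < α)
    (hquad : α ^ 2 - (t : ℝ) * α + (d : ℝ) = 0)
    (p q : ℤ) (hq : q ≠ 0) (hpq : α = (p : ℝ) / (q : ℝ)) : False := by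
  clear hq
  set r : ℚ := (p : ℚ) / (q : ℚ) with hr
  have hra : (r : ℝ) = α := by rw [hpq, hr]; push_cast; ring
  have hrq : r ^ 2 - (t : ℚ) * r + (d : ℚ) = 0 := by
    have : ((r ^ 2 - (t : ℚ) * r + (d : ℚ) : ℚ) : ℝ) = 0 := by push_cast [hra]; exact hquad
    exact_mod_cast this
  set n : ℤ := r.num with hn
  set e : ℤ := (r.den : ℤ) with hedef
  have he0 : (0:ℤ) < e := by rw [hedef]; exact_mod_cast r.pos
  have hne : (n : ℚ) / (e : ℚ) = r := by rw [hn, hedef]; exact_mod_cast Rat.num_div_den r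
  have heq : n ^ 2 - t * n * e + d * e ^ 2 = 0 := by
    have he0' : (e : ℚ) ≠ 0 := by positivity
    have h2 : ((n ^ 2 - t * n * e + d * e ^ 2 : ℤ) : ℚ) = (r ^ 2 - (t:ℚ) * r + (d:ℚ)) * e ^ 2 := by
      rw [← hne]
      push_cast
      field_simp
    rw [hrq, zero_mul] at h2
    exact_mod_cast h2
  have hcop : IsCoprime e n := by
    rw [Int.isCoprime_iff_gcd_eq_one]
    exact r.reduced.symm
  have hdvd : e ∣ n ^ 2 := ⟨t * n - d * e, by linarith [heq]⟩
  have heu : IsUnit e := (hcop.pow_right (n := 2)).isUnit_of_dvd hdvd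
  have he1 : e = 1 := by
    rcases Int.isUnit_iff.mp heu with h | h
    · exact h
    · omega
  have hna : α = (n : ℝ) := by
    rw [← hra, ← hne, he1]; push_cast; ring
  have hn2 : 2 ≤ n := by
    have : (1:ℝ) < (n:ℝ) := hna ▸ hα
    exact_mod_cast this
  have hnd : n ∣ d := ⟨t - n, by rw [he1] at heq; ring_nf; ring_nf at heq; omega⟩
  have : IsUnit n := isUnit_of_dvd_unit hnd hd
  rcases Int.isUnit_iff.mp this with h | h <;> omega

private lemma no_int_eigvec (N : Matrix (Fin 2) (Fin 2) ℤ) (hN : IsUnit N.det)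
    (α : ℝ) (hα : 1 < α)
    (hquad : α ^ 2 - (N.trace : ℝ) * α + (N.det : ℝ) = 0)
    (v : Fin 2 → ℤ) (hv : v ≠ 0)
    (h : ∀ i, ((N.mulVec v) i : ℝ) = α * ((v i : ℤ) : ℝ)) : False := by
  obtain ⟨i, hi⟩ : ∃ i, v i ≠ 0 := by
    by_contra hc
    push_neg at hc
    exact hv (funext hc)
  have hvi : ((v i : ℤ) : ℝ) ≠ 0 := Int.cast_ne_zero.mpr hi
  refine rat_eig_false N.trace N.det hN α hα hquad ((N.mulVec v) i) (v i) hi ?_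
  rw [eq_div_iff hvi, ← h i]

private lemma parallel_eig (N : Matrix (Fin 2) (Fin 2) ℤ)
    (α : ℝ) (a : Fin 2 → ℝ) (ha : a ≠ 0)
    (heig : (N.map (Int.cast : ℤ → ℝ)).mulVec a = α • a)
    (v : Fin 2 → ℤ) (hv : v ≠ 0)
    (hcross : a 0 * ((v 1 : ℤ) : ℝ) = a 1 * ((v 0 : ℤ) : ℝ)) :
    ∀ i, ((N.mulVec v) i : ℝ) = α * ((v i : ℤ) : ℝ) := by
  set w : Fin 2 → ℝ := fun i => ((v i : ℤ) : ℝ) with hw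
  obtain ⟨μ, hμ, haw⟩ : ∃ μ : ℝ, μ ≠ 0 ∧ a = μ • w := by
    obtain ⟨i, hi⟩ : ∃ i, v i ≠ 0 := by
      by_contra hc; push_neg at hc; exact hv (funext hc)
    fin_cases i
    · have hv0 : ((v 0 : ℤ) : ℝ) ≠ 0 := Int.cast_ne_zero.mpr hi
      refine ⟨a 0 / ((v 0 : ℤ) : ℝ), ?_, ?_⟩
      · intro h0
        apply ha
        have ha0 : a 0 = 0 := by
          field_simp at h0; simpa using h0
        have ha1 : a 1 = 0 := by
          have := hcross
          rw [ha0, zero_mul] at this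
          rcases mul_eq_zero.mp this.symm with h | h
          · exact h
          · exact absurd h hv0
        funext j; fin_cases j <;> assumption
      · funext j; fin_cases j
        · show a 0 = a 0 / _ * w 0
          rw [hw]; field_simp
        · show a 1 = a 0 / _ * w 1
          rw [hw]
          rw [div_mul_eq_mul_div, hcross, mul_div_assoc, div_self hv0, mul_one]
    · have hv1 : ((v 1 : ℤ) : ℝ) ≠ 0 := Int.cast_ne_zero.mpr hi
      refine ⟨a 1 / ((v 1 : ℤ) : ℝ), ?_, ?_⟩
      · intro h0
        apply ha
        have ha1 : a 1 = 0 := by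
          field_simp at h0; simpa using h0
        have ha0 : a 0 = 0 := by
          have := hcross
          rw [ha1, zero_mul] at this
          rcases mul_eq_zero.mp this with h | h
          · exact h
          · exact absurd h hv1
        funext j; fin_cases j <;> assumption
      · funext j; fin_cases j
        · show a 0 = a 1 / _ * w 0
          rw [hw]
          rw [div_mul_eq_mul_div, ← hcross, mul_div_assoc, div_self hv1, mul_one]
        · show a 1 = a 1 / _ * w 1
          rw [hw]; field_simp
  have hkey : (N.map (Int.cast : ℤ → ℝ)).mulVec w = α • w := by
    have h1 : (N.map (Int.cast : ℤ → ℝ)).mulVec (μ • w) = α • (μ • w) := by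
      rw [← haw]; exact heig
    rw [Matrix.mulVec_smul] at h1
    have h2 : μ • ((N.map (Int.cast : ℤ → ℝ)).mulVec w) = μ • (α • w) := by
      rw [h1, smul_comm]
    exact smul_right_injective _ hμ h2
  intro i
  have := congrFun hkey i
  rw [hw] at this
  simp only [Matrix.mulVec, dotProduct, Fin.sum_univ_two, Matrix.map_apply,
    Pi.smul_apply, smul_eq_mul] at this ⊢
  push_cast
  exact this

private lemma fix_one (N : Matrix (Fin 2) (Fin 2) ℤ) (hN : IsUnit N.det)
    (α : ℝ) (hα : 1 < α) (a : Fin 2 → ℝ) (ha : a ≠ 0)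
    (heig : (N.map (Int.cast : ℤ → ℝ)).mulVec a = α • a)
    (K : Matrix (Fin 2) (Fin 2) ℤ) (hdet : K.det = 1)
    (hcomm : K * N = N * K)
    (hfix : (K.map (Int.cast : ℤ → ℝ)).mulVec a = a) : K = 1 := by
  clear hcomm
  -- quadratic satisfied by α
  have hquadN : α ^ 2 - (N.trace : ℝ) * α + (N.det : ℝ) = 0 := by
    have h := eig_quad (N.map (Int.cast : ℤ → ℝ)) a ha α heig
    have ht : (N.map (Int.cast : ℤ → ℝ)).trace = (N.trace : ℝ) := by
      rw [Matrix.trace_fin_two, Matrix.trace_fin_two]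
      push_cast [Matrix.map_apply]; ring
    have hd : (N.map (Int.cast : ℤ → ℝ)).det = (N.det : ℝ) := by
      rw [Matrix.det_fin_two, Matrix.det_fin_two]
      push_cast [Matrix.map_apply]; ring
    rwa [ht, hd] at h
  -- trace of K is 2
  have htr : K.trace = 2 := by
    have h := eig_quad (K.map (Int.cast : ℤ → ℝ)) a ha 1 (by rw [hfix, one_smul])
    have ht : (K.map (Int.cast : ℤ → ℝ)).trace = (K.trace : ℝ) := by
      rw [Matrix.trace_fin_two, Matrix.trace_fin_two]
      push_cast [Matrix.map_apply]; ring
    have hd : (K.map (Int.cast : ℤ → ℝ)).det = (K.det : ℝ) := by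
      rw [Matrix.det_fin_two, Matrix.det_fin_two]
      push_cast [Matrix.map_apply]; ring
    rw [ht, hd, hdet] at h
    have : (K.trace : ℝ) = 2 := by push_cast at h ⊢; linarith
    exact_mod_cast this
  set p : ℤ := K 0 0 - 1 with hp
  set q : ℤ := K 0 1 with hq
  set r : ℤ := K 1 0 with hr
  have hs : K 1 1 = 1 - p := by
    rw [Matrix.trace_fin_two] at htr; omega
  -- row equations
  have e0 : (p : ℝ) * a 0 + (q : ℝ) * a 1 = 0 := by
    have h := congrFun hfix 0
    simp only [Matrix.mulVec, dotProduct, Fin.sum_univ_two, Matrix.map_apply] at h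
    have hK00 : K 0 0 = p + 1 := by omega
    rw [hK00] at h
    push_cast at h ⊢
    linarith
  have e1 : (r : ℝ) * a 0 - (p : ℝ) * a 1 = 0 := by
    have h := congrFun hfix 1
    simp only [Matrix.mulVec, dotProduct, Fin.sum_univ_two, Matrix.map_apply] at h
    rw [hs] at h
    push_cast at h ⊢
    linarith
  by_contra hK
  have hne : ¬ (p = 0 ∧ q = 0 ∧ r = 0) := by
    rintro ⟨h1, h2, h3⟩
    apply hK
    ext i j
    fin_cases i <;> fin_cases j <;>
      simp [Matrix.one_apply] <;> omega
  by_cases hpr : p = 0 ∧ r = 0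
  · -- use v = (q, -p) = (q, 0)
    have hq0 : q ≠ 0 := by tauto
    set v : Fin 2 → ℤ := ![q, -p] with hv
    have hvne : v ≠ 0 := by
      intro h0
      apply hq0
      have := congrFun h0 0
      simpa [hv] using this
    have hcross : a 0 * ((v 1 : ℤ) : ℝ) = a 1 * ((v 0 : ℤ) : ℝ) := by
      simp only [hv]
      show a 0 * ((-p : ℤ) : ℝ) = a 1 * ((q : ℤ) : ℝ)
      push_cast
      nlinarith [e0]
    exact no_int_eigvec N hN α hα hquadN v hvne (parallel_eig N α a ha heig v hvne hcross)
  · -- use v = (p, r)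
    set v : Fin 2 → ℤ := ![p, r] with hv
    have hvne : v ≠ 0 := by
      intro h0
      apply hpr
      constructor
      · have := congrFun h0 0; simpa [hv] using this
      · have := congrFun h0 1; simpa [hv] using this
    have hcross : a 0 * ((v 1 : ℤ) : ℝ) = a 1 * ((v 0 : ℤ) : ℝ) := by
      simp only [hv]
      show a 0 * ((r : ℤ) : ℝ) = a 1 * ((p : ℤ) : ℝ)
      nlinarith [e1]
    exact no_int_eigvec N hN α hα hquadN v hvne (parallel_eig N α a ha heig v hvne hcross)

section Good

variable (N : Matrix (Fin 2) (Fin 2) ℤ) (a : Fin 2 → ℝ)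

def isGood (K : Matrix.SpecialLinearGroup (Fin 2) ℤ) (c : ℝ) : Prop :=
  ((K : Matrix (Fin 2) (Fin 2) ℤ) * N = N * (K : Matrix (Fin 2) (Fin 2) ℤ)) ∧ 0 < c ∧
    ((K : Matrix (Fin 2) (Fin 2) ℤ).map (Int.cast : ℤ → ℝ)).mulVec a = c • a

lemma mapcast_mul (A B : Matrix (Fin 2) (Fin 2) ℤ) :
    (A * B).map (Int.cast : ℤ → ℝ) = A.map Int.cast * B.map Int.cast := by
  have h := Matrix.map_mul (L := A) (M := B) (f := Int.castRingHom ℝ)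
  simpa using h

lemma mapcast_one : (1 : Matrix (Fin 2) (Fin 2) ℤ).map (Int.cast : ℤ → ℝ) = 1 :=
  Matrix.map_one _ (by simp) (by simp)

variable {N a}

lemma isGood.mul {K K' : Matrix.SpecialLinearGroup (Fin 2) ℤ} {c c' : ℝ}
    (h : isGood N a K c) (h' : isGood N a K' c') : isGood N a (K * K') (c * c') := by
  obtain ⟨h1, hc, h2⟩ := h
  obtain ⟨h1', hc', h2'⟩ := h'
  refine ⟨?_, mul_pos hc hc', ?_⟩
  · rw [Matrix.SpecialLinearGroup.coe_mul, mul_assoc, h1', ← mul_assoc, h1, mul_assoc]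
  · rw [Matrix.SpecialLinearGroup.coe_mul, mapcast_mul, ← Matrix.mulVec_mulVec, h2',
      Matrix.mulVec_smul, h2, smul_smul, mul_comm]

lemma isGood.one : isGood N a 1 1 := by
  refine ⟨by simp, one_pos, ?_⟩
  rw [Matrix.SpecialLinearGroup.coe_one, mapcast_one, Matrix.one_mulVec, one_smul]

lemma isGood.inv {K : Matrix.SpecialLinearGroup (Fin 2) ℤ} {c : ℝ}
    (h : isGood N a K c) : isGood N a K⁻¹ c⁻¹ := by
  obtain ⟨h1, hc, h2⟩ := h
  have hKi : ((K⁻¹ : Matrix.SpecialLinearGroup (Fin 2) ℤ) : Matrix (Fin 2) (Fin 2) ℤ) *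
      (K : Matrix (Fin 2) (Fin 2) ℤ) = 1 := by
    rw [← Matrix.SpecialLinearGroup.coe_mul, inv_mul_cancel, Matrix.SpecialLinearGroup.coe_one]
  have hKi' : (K : Matrix (Fin 2) (Fin 2) ℤ) *
      ((K⁻¹ : Matrix.SpecialLinearGroup (Fin 2) ℤ) : Matrix (Fin 2) (Fin 2) ℤ) = 1 := by
    rw [← Matrix.SpecialLinearGroup.coe_mul, mul_inv_cancel, Matrix.SpecialLinearGroup.coe_one]
  set Ki : Matrix (Fin 2) (Fin 2) ℤ := ((K⁻¹ : Matrix.SpecialLinearGroup (Fin 2) ℤ) :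
      Matrix (Fin 2) (Fin 2) ℤ) with hKidef
  refine ⟨?_, inv_pos.mpr hc, ?_⟩
  · calc Ki * N = Ki * N * ((K : Matrix (Fin 2) (Fin 2) ℤ) * Ki) := by rw [hKi', mul_one]
      _ = Ki * (N * (K : Matrix (Fin 2) (Fin 2) ℤ)) * Ki := by
          simp only [mul_assoc]
      _ = Ki * ((K : Matrix (Fin 2) (Fin 2) ℤ) * N) * Ki := by rw [h1]
      _ = (Ki * (K : Matrix (Fin 2) (Fin 2) ℤ)) * N * Ki := by simp only [mul_assoc]
      _ = N * Ki := by rw [hKi, one_mul]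
  · have hmap : Ki.map (Int.cast : ℤ → ℝ) * (K : Matrix (Fin 2) (Fin 2) ℤ).map Int.cast = 1 := by
      rw [← mapcast_mul, hKi, mapcast_one]
    calc (Ki.map (Int.cast : ℤ → ℝ)).mulVec a
        = (Ki.map (Int.cast : ℤ → ℝ)).mulVec (c⁻¹ • (c • a)) := by
          rw [smul_smul, inv_mul_cancel₀ hc.ne', one_smul]
      _ = c⁻¹ • (Ki.map (Int.cast : ℤ → ℝ)).mulVec (c • a) := by rw [Matrix.mulVec_smul]
      _ = c⁻¹ • (Ki.map (Int.cast : ℤ → ℝ)).mulVec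
            (((K : Matrix (Fin 2) (Fin 2) ℤ).map (Int.cast : ℤ → ℝ)).mulVec a) := by rw [h2]
      _ = c⁻¹ • a := by rw [Matrix.mulVec_mulVec, hmap, Matrix.one_mulVec]

lemma isGood.zpow {K : Matrix.SpecialLinearGroup (Fin 2) ℤ} {c : ℝ}
    (h : isGood N a K c) (n : ℤ) : isGood N a (K ^ n) (c ^ n) := by
  have hc : c ≠ 0 := h.2.1.ne'
  induction n using Int.induction_on with
  | zero => rw [zpow_zero, zpow_zero]; exact isGood.one
  | succ k ih =>
      rw [_root_.zpow_add_one, zpow_add_one₀ hc]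
      exact ih.mul h
  | pred k ih =>
      rw [_root_.zpow_sub_one, zpow_sub_one₀ hc]
      exact ih.mul h.inv

lemma isGood.c_unique (ha : a ≠ 0) {K : Matrix.SpecialLinearGroup (Fin 2) ℤ} {c c' : ℝ}
    (h : isGood N a K c) (h' : isGood N a K c') : c = c' := by
  obtain ⟨i, hi⟩ : ∃ i, a i ≠ 0 := by
    by_contra hc; push_neg at hc; exact ha (funext hc)
  have := h.2.2.symm.trans h'.2.2
  have hci := congrFun this i
  simp only [Pi.smul_apply, smul_eq_mul] at hci
  exact mul_right_cancel₀ hi hci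

lemma isGood.trace_eq (ha : a ≠ 0) {K : Matrix.SpecialLinearGroup (Fin 2) ℤ} {c : ℝ}
    (h : isGood N a K c) : c + c⁻¹ = (((K : Matrix (Fin 2) (Fin 2) ℤ).trace : ℤ) : ℝ) := by
  have hq := eig_quad ((K : Matrix (Fin 2) (Fin 2) ℤ).map (Int.cast : ℤ → ℝ)) a ha c h.2.2
  have ht : ((K : Matrix (Fin 2) (Fin 2) ℤ).map (Int.cast : ℤ → ℝ)).trace =
      (((K : Matrix (Fin 2) (Fin 2) ℤ).trace : ℤ) : ℝ) := by
    rw [Matrix.trace_fin_two, Matrix.trace_fin_two]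
    push_cast [Matrix.map_apply]; ring
  have hd : ((K : Matrix (Fin 2) (Fin 2) ℤ).map (Int.cast : ℤ → ℝ)).det = 1 := by
    have h1 : ((K : Matrix (Fin 2) (Fin 2) ℤ).det : ℝ) = 1 := by
      rw [K.2]; norm_num
    rw [Matrix.det_fin_two] at h1
    rw [Matrix.det_fin_two]
    push_cast [Matrix.map_apply] at h1 ⊢
    linarith
  rw [ht, hd] at hq
  have hc0 : c ≠ 0 := h.2.1.ne'
  field_simp
  nlinarith [hq]

end Good

theorem stmt11 (N : Matrix (Fin 2) (Fin 2) ℤ) (hN : IsUnit N.det)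
    (α : ℝ) (hα : 1 < α) (a : Fin 2 → ℝ) (ha : a ≠ 0)
    (heig : (N.map (Int.cast : ℤ → ℝ)).mulVec a = α • a) :
    ∃ K₀ : Matrix.SpecialLinearGroup (Fin 2) ℤ,
      Function.Injective (fun n : ℤ => K₀ ^ n) ∧
      ∀ K : Matrix.SpecialLinearGroup (Fin 2) ℤ,
        (((K : Matrix (Fin 2) (Fin 2) ℤ) * N = N * (K : Matrix (Fin 2) (Fin 2) ℤ) ∧
            ∃ c : ℝ, 0 < c ∧
              ((K : Matrix (Fin 2) (Fin 2) ℤ).map (Int.cast : ℤ → ℝ)).mulVec a = c • a)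
          ↔ ∃ n : ℤ, K = K₀ ^ n) := by
  have hα0 : (0:ℝ) < α := lt_trans one_pos hα
  -- if two good elements share a scaling factor, they are equal
  have K_unique : ∀ (K K' : Matrix.SpecialLinearGroup (Fin 2) ℤ) (c : ℝ),
      isGood N a K c → isGood N a K' c → K = K' := by
    intro K K' c h h'
    have hg : isGood N a (K * K'⁻¹) (c * c⁻¹) := h.mul h'.inv
    rw [mul_inv_cancel₀ h.2.1.ne'] at hg
    have h1 : ((K * K'⁻¹ : Matrix.SpecialLinearGroup (Fin 2) ℤ) :
        Matrix (Fin 2) (Fin 2) ℤ) = 1 := by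
      apply fix_one N hN α hα a ha heig _ (K * K'⁻¹).2 hg.1
      rw [hg.2.2, one_smul]
    exact mul_inv_eq_one.mp (Subtype.ext h1)
  -- N^2 gives a good element with factor α^2 > 1
  have hdet2 : (N * N).det = 1 := by
    rw [Matrix.det_mul]
    rcases Int.isUnit_iff.mp hN with h | h <;> rw [h] <;> norm_num
  set K₁ : Matrix.SpecialLinearGroup (Fin 2) ℤ := ⟨N * N, hdet2⟩ with hK₁
  have hgood₁ : isGood N a K₁ (α ^ 2) := by
    refine ⟨?_, by positivity, ?_⟩
    · show (N * N) * N = N * (N * N)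
      rw [mul_assoc]
    · show ((N * N).map (Int.cast : ℤ → ℝ)).mulVec a = (α ^ 2) • a
      rw [mapcast_mul, ← Matrix.mulVec_mulVec, heig, Matrix.mulVec_smul, heig, smul_smul, sq]
  have hα2 : 1 < α ^ 2 := by nlinarith
  -- least integer m = c + c⁻¹ over good (K, c) with c > 1
  set P : ℤ → Prop := fun m => ∃ K c, isGood N a K c ∧ 1 < c ∧ c + c⁻¹ = (m : ℝ) with hP
  have Hbdd : ∃ b : ℤ, ∀ z : ℤ, P z → b ≤ z := by
    refine ⟨0, fun z hz => ?_⟩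
    obtain ⟨K, c, hg, hc1, hcz⟩ := hz
    have hcpos : (0:ℝ) < c := hg.2.1
    have : (0:ℝ) < (z : ℝ) := by
      rw [← hcz]; positivity
    exact_mod_cast this.le
  have Hinh : ∃ z : ℤ, P z := by
    refine ⟨((K₁ : Matrix (Fin 2) (Fin 2) ℤ).trace : ℤ), K₁, α ^ 2, hgood₁, hα2, ?_⟩
    exact hgood₁.trace_eq ha
  obtain ⟨m₀, hm₀, hmin⟩ := Int.exists_least_of_bdd Hbdd Hinh
  obtain ⟨K₀, c₀, hg₀, hc₀1, htr₀⟩ := hm₀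
  have hc₀0 : (0:ℝ) < c₀ := hg₀.2.1
  -- minimality in terms of c
  have cmin : ∀ (K : Matrix.SpecialLinearGroup (Fin 2) ℤ) (c : ℝ),
      isGood N a K c → 1 < c → c₀ ≤ c := by
    intro K c hg hc1
    have hPz : P ((K : Matrix (Fin 2) (Fin 2) ℤ).trace) :=
      ⟨K, c, hg, hc1, hg.trace_eq ha⟩
    have hle : m₀ ≤ (K : Matrix (Fin 2) (Fin 2) ℤ).trace := hmin _ hPz
    by_contra hlt
    push_neg at hlt
    have htr := hg.trace_eq ha
    have e1 : c * c⁻¹ = 1 := mul_inv_cancel₀ (by positivity)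
    have e2 : c₀ * c₀⁻¹ = 1 := mul_inv_cancel₀ hc₀0.ne'
    have hcc : (0:ℝ) < c * c₀ := by positivity
    have hpoly : c ^ 2 * c₀ + c₀ < c₀ ^ 2 * c + c := by
      nlinarith [mul_pos (sub_pos.mpr hlt) (show (0:ℝ) < c * c₀ - 1 by nlinarith)]
    have hkey : c + c⁻¹ < c₀ + c₀⁻¹ := by
      rw [← sub_pos]
      have hrepr : c₀ + c₀⁻¹ - (c + c⁻¹) = (c₀ ^ 2 * c + c - (c ^ 2 * c₀ + c₀)) / (c * c₀) := by
        field_simp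
      rw [hrepr]
      exact div_pos (by linarith) hcc
    rw [htr, htr₀] at hkey
    have : ((K : Matrix (Fin 2) (Fin 2) ℤ).trace : ℝ) < (m₀ : ℝ) := hkey
    have : (K : Matrix (Fin 2) (Fin 2) ℤ).trace < m₀ := by exact_mod_cast this
    omega
  refine ⟨K₀, ?_, ?_⟩
  · intro m n hmn
    simp only at hmn
    have g1 := hg₀.zpow m
    have g2 := hg₀.zpow n
    rw [hmn] at g1
    have : c₀ ^ m = c₀ ^ n := g1.c_unique ha g2
    exact zpow_right_injective₀ hc₀0 (ne_of_gt hc₀1) this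
  · intro K
    constructor
    · rintro ⟨hcomm, c, hcpos, hvec⟩
      have hg : isGood N a K c := ⟨hcomm, hcpos, hvec⟩
      obtain ⟨n, hn1, hn2⟩ := exists_mem_Ico_zpow hcpos hc₀1
      refine ⟨n, ?_⟩
      have hg' : isGood N a (K * (K₀ ^ n)⁻¹) (c * (c₀ ^ n)⁻¹) := hg.mul (hg₀.zpow n).inv
      have hcn0 : (0:ℝ) < c₀ ^ n := zpow_pos hc₀0 n
      have h1c' : 1 ≤ c * (c₀ ^ n)⁻¹ := by
        rw [le_mul_inv_iff₀ hcn0, one_mul]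
        exact hn1
      rcases eq_or_lt_of_le h1c' with heq | hlt
      · have hgn : isGood N a (K₀ ^ n) (c₀ ^ n) := hg₀.zpow n
        have hceq : c = c₀ ^ n := by
          have h2 : c * (c₀ ^ n)⁻¹ = 1 := heq.symm
          field_simp at h2
          linarith
        rw [hceq] at hg
        exact K_unique _ _ _ hg hgn
      · exfalso
        have hlt2 : c * (c₀ ^ n)⁻¹ < c₀ := by
          rw [mul_inv_lt_iff₀ hcn0]
          have h3 : c < c₀ ^ n * c₀ := by rw [← zpow_add_one₀ hc₀0.ne']; exact hn2
          rw [mul_comm c₀ (c₀ ^ n)]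
          exact h3
        have := cmin _ _ hg' hlt
        linarith
    · rintro ⟨n, rfl⟩
      have hg := hg₀.zpow n
      exact ⟨hg.1, c₀ ^ n, hg.2.1, hg.2.2⟩
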